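/- Let G be a real r×n matrix and H a real n×l matrix with r < l < n, and suppose the product GH has full rank r. Let Q be an r×n matrix with orthonormal rows whose row space equals the row space of G. Then σ_r(QH) ≥ σ_r(GH)/σ_1(G). -/

import Mathlib

open Matrix MeasureTheory ProbabilityTheory Real
open scoped BigOperators ENNReal

noncomputable section

namespace LRA

/-- The `j`-th largest singular value (1-indexed) of a real `m × n` matrix;
by convention it is `0` for `j = 0` or `j > n`. -/
noncomputable def sval {m n : ℕ} (A : Matrix (Fin m) (Fin n) ℝ) (j : ℕ) : ℝ :=
  if hj : 1 ≤ j ∧ j ≤ n then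
    Real.sqrt ((by simpa using Matrix.isHermitian_conjTranspose_mul_self A : (Aᵀ * A).IsHermitian).eigenvalues
      (Tuple.sort (by simpa using Matrix.isHermitian_conjTranspose_mul_self A : (Aᵀ * A).IsHermitian).eigenvalues
        (Fin.rev ⟨j - 1, by omega⟩)))
  else 0

/-- Spectral norm: the largest singular value. -/
noncomputable def specNorm {m n : ℕ} (A : Matrix (Fin m) (Fin n) ℝ) : ℝ := sval A 1

/-- Frobenius norm. -/
noncomputable def frobNorm {m n : ℕ} (A : Matrix (Fin m) (Fin n) ℝ) : ℝ :=
  Real.sqrt (∑ i, ∑ j, (A i j) ^ 2)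

/-- The optimal Frobenius rank-`r` approximation error `(∑_{j>r} σ_j(A)²)^{1/2}`. -/
noncomputable def frobTail {m n : ℕ} (A : Matrix (Fin m) (Fin n) ℝ) (r : ℕ) : ℝ :=
  Real.sqrt (∑ j ∈ Finset.Ioc r n, sval A j ^ 2)

/-- The four Penrose conditions. -/
def IsMoorePenrose {m n : ℕ} (A : Matrix (Fin m) (Fin n) ℝ)
    (B : Matrix (Fin n) (Fin m) ℝ) : Prop :=
  A * B * A = A ∧ B * A * B = B ∧ (A * B)ᵀ = A * B ∧ (B * A)ᵀ = B * A

open scoped Classical in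
/-- The Moore–Penrose pseudoinverse. -/
noncomputable def pinv {m n : ℕ} (A : Matrix (Fin m) (Fin n) ℝ) :
    Matrix (Fin n) (Fin m) ℝ :=
  if h : ∃ B, IsMoorePenrose A B then h.choose else 0

/-- The `r`-projective volume `∏_{j=1}^r σ_j(A)`. -/
noncomputable def pvol {m n : ℕ} (r : ℕ) (A : Matrix (Fin m) (Fin n) ℝ) : ℝ :=
  ∏ j ∈ Finset.Icc 1 r, sval A j

instance matrixMeasurableSpace {p q : ℕ} : MeasurableSpace (Matrix (Fin p) (Fin q) ℝ) :=
  MeasurableSpace.pi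

/-- A random matrix all of whose entries are i.i.d. standard normal random variables. -/
def IsGaussianMatrix {Ω : Type*} [MeasurableSpace Ω] (μ : Measure Ω) {p q : ℕ}
    (G : Ω → Matrix (Fin p) (Fin q) ℝ) : Prop :=
  Measurable G ∧
  iIndepFun (m := fun _ : Fin p × Fin q => (inferInstance : MeasurableSpace ℝ))
    (fun ij ω => G ω ij.1 ij.2) μ ∧
  ∀ i j, Measure.map (fun ω => G ω i j) μ = gaussianReal 0 1

/-- The `k × l` submatrix of `W` with rows indexed by `I` and columns by `J`. -/
noncomputable def subm {m n k l : ℕ} (W : Matrix (Fin m) (Fin n) ℝ)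
    {I : Finset (Fin m)} {J : Finset (Fin n)} (hI : I.card = k) (hJ : J.card = l) :
    Matrix (Fin k) (Fin l) ℝ :=
  W.submatrix (fun i => ((I.orderIsoOfFin hI i : I) : Fin m))
    (fun j => ((J.orderIsoOfFin hJ j : J) : Fin n))


section Helpers

variable {m : ℕ} {A : Matrix (Fin m) (Fin m) ℝ} (hA : A.IsHermitian)

private lemma rayleigh_eq (x : Fin m → ℝ) :
    x ⬝ᵥ (A *ᵥ x) = ∑ j, hA.eigenvalues j *
      (((hA.eigenvectorUnitary : Matrix (Fin m) (Fin m) ℝ)ᵀ *ᵥ x) j)^2 := by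
  set U := (hA.eigenvectorUnitary : Matrix (Fin m) (Fin m) ℝ) with hU
  have hsp := hA.spectral_theorem
  have hstar : star U = Uᵀ := by
    ext i j; simp [Matrix.star_apply]
  conv_lhs => rw [hsp, Unitary.conjStarAlgAut_apply, hstar]
  rw [← mulVec_mulVec, ← mulVec_mulVec, dotProduct_mulVec, ← mulVec_transpose]
  simp [dotProduct, mulVec_diagonal, Finset.mul_sum, pow_two]
  ring_nf
  exact Finset.sum_congr rfl fun j _ => by rw [← hU]; ring

private lemma norm_sq_eq (x : Fin m → ℝ) :
    x ⬝ᵥ x = ∑ j, (((hA.eigenvectorUnitary : Matrix (Fin m) (Fin m) ℝ)ᵀ *ᵥ x) j)^2 := by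
  set U := (hA.eigenvectorUnitary : Matrix (Fin m) (Fin m) ℝ) with hU
  have hstar : star U = Uᵀ := by ext i j; simp [Matrix.star_apply]
  have h1 : U * Uᵀ = 1 := by
    rw [← hstar]; exact (Matrix.mem_unitaryGroup_iff).mp hA.eigenvectorUnitary.2
  conv_lhs => rw [show x = (U * Uᵀ) *ᵥ x by rw [h1, one_mulVec], ← mulVec_mulVec,
    dotProduct_mulVec, ← mulVec_transpose]
  simp [dotProduct, pow_two, h1]

private def coordSub (m : ℕ) (s : Finset (Fin m)) : Submodule ℝ (Fin m → ℝ) where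
  carrier := {x | ∀ j ∉ s, x j = 0}
  add_mem' := fun hx hy j hj => by simp [Set.mem_setOf_eq] at hx hy ⊢; simp [hx j hj, hy j hj]
  zero_mem' := fun j hj => rfl
  smul_mem' := fun c x hx j hj => by simp [Set.mem_setOf_eq] at hx ⊢; simp [hx j hj]

private lemma mem_coordSub {m : ℕ} {s : Finset (Fin m)} {x : Fin m → ℝ} :
    x ∈ coordSub m s ↔ ∀ j ∉ s, x j = 0 := Iff.rfl

private noncomputable def coordSubEquiv (m : ℕ) (s : Finset (Fin m)) :
    coordSub m s ≃ₗ[ℝ] (↥s → ℝ) where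
  toFun x j := x.1 j
  map_add' x y := rfl
  map_smul' c x := rfl
  invFun y := ⟨fun j => if h : j ∈ s then y ⟨j, h⟩ else 0, fun j hj => by simp [hj]⟩
  left_inv x := by
    ext j
    by_cases h : j ∈ s <;> simp [h]
    exact (x.2 j h).symm
  right_inv y := by ext j; simp

private lemma finrank_coordSub (m : ℕ) (s : Finset (Fin m)) :
    Module.finrank ℝ (coordSub m s) = s.card := by
  rw [(coordSubEquiv m s).finrank_eq]
  simp [Module.finrank_pi]

private noncomputable def eigSub (hA : A.IsHermitian) (s : Finset (Fin m)) :
    Submodule ℝ (Fin m → ℝ) :=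
  Submodule.comap (Matrix.mulVecLin (hA.eigenvectorUnitary : Matrix (Fin m) (Fin m) ℝ)ᵀ)
    (coordSub m s)

private lemma mem_eigSub {s : Finset (Fin m)} {x : Fin m → ℝ} :
    x ∈ eigSub hA s ↔
      ∀ j ∉ s, (((hA.eigenvectorUnitary : Matrix (Fin m) (Fin m) ℝ)ᵀ) *ᵥ x) j = 0 :=
  Iff.rfl

private lemma star_eigU (hA : A.IsHermitian) :
    star (hA.eigenvectorUnitary : Matrix (Fin m) (Fin m) ℝ)
      = (hA.eigenvectorUnitary : Matrix (Fin m) (Fin m) ℝ)ᵀ := by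
  ext i j; simp [Matrix.star_apply]

private noncomputable def eigEquiv (hA : A.IsHermitian) : (Fin m → ℝ) ≃ₗ[ℝ] (Fin m → ℝ) :=
  LinearEquiv.ofLinear
    (Matrix.mulVecLin (hA.eigenvectorUnitary : Matrix (Fin m) (Fin m) ℝ)ᵀ)
    (Matrix.mulVecLin (hA.eigenvectorUnitary : Matrix (Fin m) (Fin m) ℝ))
    (by
      rw [← Matrix.mulVecLin_mul, ← star_eigU hA,
        (Matrix.mem_unitaryGroup_iff').mp hA.eigenvectorUnitary.2, Matrix.mulVecLin_one])
    (by
      rw [← Matrix.mulVecLin_mul, ← star_eigU hA,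
        (Matrix.mem_unitaryGroup_iff).mp hA.eigenvectorUnitary.2, Matrix.mulVecLin_one])

private lemma finrank_eigSub (hA : A.IsHermitian) (s : Finset (Fin m)) :
    Module.finrank ℝ (eigSub hA s) = s.card := by
  have h1 : eigSub hA s = Submodule.comap (eigEquiv hA : (Fin m → ℝ) →ₗ[ℝ] (Fin m → ℝ))
      (coordSub m s) := rfl
  rw [h1, Submodule.comap_equiv_eq_map_symm, LinearEquiv.finrank_map_eq, finrank_coordSub]

private lemma exists_ne_zero_mem_inf {m : ℕ} {V W : Submodule ℝ (Fin m → ℝ)}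
    (h : m < Module.finrank ℝ V + Module.finrank ℝ W) :
    ∃ x, x ≠ 0 ∧ x ∈ V ∧ x ∈ W := by
  have hsup : Module.finrank ℝ ↥(V ⊔ W) ≤ m := by
    have := Submodule.finrank_le (V ⊔ W)
    simpa using this
  have hinf : 0 < Module.finrank ℝ ↥(V ⊓ W) := by
    have := Submodule.finrank_sup_add_finrank_inf_eq V W
    omega
  have hne : V ⊓ W ≠ ⊥ := by
    intro hbot
    rw [hbot, finrank_bot] at hinf
    exact lt_irrefl 0 hinf
  obtain ⟨x, hx, hx0⟩ := (Submodule.ne_bot_iff _).mp hne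
  exact ⟨x, hx0, hx.1, hx.2⟩

private lemma rayleigh_le_of_mem {t : ℝ} {s : Finset (Fin m)}
    (hμ : ∀ j ∈ s, hA.eigenvalues j ≤ t) {x : Fin m → ℝ} (hx : x ∈ eigSub hA s) :
    x ⬝ᵥ (A *ᵥ x) ≤ t * (x ⬝ᵥ x) := by
  rw [rayleigh_eq hA x, norm_sq_eq hA x, Finset.mul_sum]
  refine Finset.sum_le_sum fun j _ => ?_
  by_cases hj : j ∈ s
  · exact mul_le_mul_of_nonneg_right (hμ j hj) (sq_nonneg _)
  · rw [(mem_eigSub hA).mp hx j hj]; simp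

private lemma rayleigh_ge_of_mem {t : ℝ} {s : Finset (Fin m)}
    (hμ : ∀ j ∈ s, t ≤ hA.eigenvalues j) {x : Fin m → ℝ} (hx : x ∈ eigSub hA s) :
    t * (x ⬝ᵥ x) ≤ x ⬝ᵥ (A *ᵥ x) := by
  rw [rayleigh_eq hA x, norm_sq_eq hA x, Finset.mul_sum]
  refine Finset.sum_le_sum fun j _ => ?_
  by_cases hj : j ∈ s
  · exact mul_le_mul_of_nonneg_right (hμ j hj) (sq_nonneg _)
  · rw [(mem_eigSub hA).mp hx j hj]; simp

private lemma dotProduct_self_nonneg' {m : ℕ} (x : Fin m → ℝ) : 0 ≤ x ⬝ᵥ x :=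
  Finset.sum_nonneg fun j _ => mul_self_nonneg _

private lemma dotProduct_self_pos' {m : ℕ} {x : Fin m → ℝ} (hx : x ≠ 0) : 0 < x ⬝ᵥ x := by
  rcases Function.ne_iff.mp hx with ⟨j, hj⟩
  have hpos : (0:ℝ) < x j * x j := by
    have hnn := mul_self_nonneg (x j)
    rcases hnn.lt_or_eq with h | h
    · exact h
    · exact absurd (by nlinarith [sq_abs (x j)] : x j = 0) hj
  calc (0:ℝ) < x j * x j := hpos
    _ ≤ x ⬝ᵥ x := Finset.single_le_sum (f := fun k => x k * x k)
        (fun k _ => mul_self_nonneg _) (Finset.mem_univ j)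

private lemma sval_nonneg {p q : ℕ} (A : Matrix (Fin p) (Fin q) ℝ) (j : ℕ) :
    0 ≤ sval A j := by
  rw [sval]
  split
  · exact Real.sqrt_nonneg _
  · exact le_refl 0

private lemma sval_le_of_dominated {a b l : ℕ} (B : Matrix (Fin a) (Fin l) ℝ)
    (C : Matrix (Fin b) (Fin l) ℝ) {c : ℝ} (hc : 0 ≤ c)
    (hdom : ∀ x : Fin l → ℝ, (B *ᵥ x) ⬝ᵥ (B *ᵥ x) ≤ c^2 * ((C *ᵥ x) ⬝ᵥ (C *ᵥ x)))
    {k : ℕ} (hk1 : 1 ≤ k) (hkl : k ≤ l) :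
    sval B k ≤ c * sval C k := by
  have hT := (by simpa using Matrix.isHermitian_conjTranspose_mul_self B : (Bᵀ * B).IsHermitian)
  have hS := (by simpa using Matrix.isHermitian_conjTranspose_mul_self C : (Cᵀ * C).IsHermitian)
  set p : Fin l := Fin.rev ⟨k-1, by omega⟩ with hp
  have hpval : p.val = l - k := by simp [hp, Fin.rev]; omega
  set σT := Tuple.sort hT.eigenvalues with hσT
  set σS := Tuple.sort hS.eigenvalues with hσS
  set sT := Finset.image σT (Finset.Ici p) with hsT
  set sS := Finset.image σS (Finset.Iic p) with hsS
  have hcardT : sT.card = k := by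
    rw [hsT, Finset.card_image_of_injective _ σT.injective, Fin.card_Ici, hpval]
    omega
  have hcardS : sS.card = l - k + 1 := by
    rw [hsS, Finset.card_image_of_injective _ σS.injective, Fin.card_Iic, hpval]
  obtain ⟨x, hx0, hxT, hxS⟩ := exists_ne_zero_mem_inf
    (V := eigSub hT sT) (W := eigSub hS sS) (by
      rw [finrank_eigSub, finrank_eigSub, hcardT, hcardS]; omega)
  have hxx := dotProduct_self_pos' hx0
  have hblow : hT.eigenvalues (σT p) * (x ⬝ᵥ x) ≤ x ⬝ᵥ ((Bᵀ * B) *ᵥ x) := by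
    refine rayleigh_ge_of_mem hT (fun j hj => ?_) hxT
    obtain ⟨i, hi, rfl⟩ := Finset.mem_image.mp hj
    exact Tuple.monotone_sort hT.eigenvalues (Finset.mem_Ici.mp hi)
  have hbhigh : x ⬝ᵥ ((Cᵀ * C) *ᵥ x) ≤ hS.eigenvalues (σS p) * (x ⬝ᵥ x) := by
    refine rayleigh_le_of_mem hS (fun j hj => ?_) hxS
    obtain ⟨i, hi, rfl⟩ := Finset.mem_image.mp hj
    exact Tuple.monotone_sort hS.eigenvalues (Finset.mem_Iic.mp hi)
  have hTq : x ⬝ᵥ ((Bᵀ * B) *ᵥ x) = (B *ᵥ x) ⬝ᵥ (B *ᵥ x) := by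
    rw [← mulVec_mulVec, dotProduct_mulVec, vecMul_transpose]
  have hSq : x ⬝ᵥ ((Cᵀ * C) *ᵥ x) = (C *ᵥ x) ⬝ᵥ (C *ᵥ x) := by
    rw [← mulVec_mulVec, dotProduct_mulVec, vecMul_transpose]
  have key : hT.eigenvalues (σT p) ≤ c^2 * hS.eigenvalues (σS p) := by
    have h1 : hT.eigenvalues (σT p) * (x ⬝ᵥ x) ≤ (c^2 * hS.eigenvalues (σS p)) * (x ⬝ᵥ x) := by
      calc hT.eigenvalues (σT p) * (x ⬝ᵥ x) ≤ x ⬝ᵥ ((Bᵀ * B) *ᵥ x) := hblow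
        _ = (B *ᵥ x) ⬝ᵥ (B *ᵥ x) := hTq
        _ ≤ c^2 * ((C *ᵥ x) ⬝ᵥ (C *ᵥ x)) := hdom x
        _ = c^2 * (x ⬝ᵥ ((Cᵀ * C) *ᵥ x)) := by rw [hSq]
        _ ≤ c^2 * (hS.eigenvalues (σS p) * (x ⬝ᵥ x)) :=
            mul_le_mul_of_nonneg_left hbhigh (sq_nonneg c)
        _ = (c^2 * hS.eigenvalues (σS p)) * (x ⬝ᵥ x) := by ring
    exact le_of_mul_le_mul_right h1 hxx
  have hcond : 1 ≤ k ∧ k ≤ l := ⟨hk1, hkl⟩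
  rw [sval, sval, dif_pos hcond, dif_pos hcond]
  calc Real.sqrt (hT.eigenvalues (σT p))
      ≤ Real.sqrt (c^2 * hS.eigenvalues (σS p)) := Real.sqrt_le_sqrt key
    _ = c * Real.sqrt (hS.eigenvalues (σS p)) := by
        rw [Real.sqrt_mul (sq_nonneg c), Real.sqrt_sq hc]

private lemma opnorm_bound {r' n' : ℕ} (hn : 1 ≤ n') (G : Matrix (Fin r') (Fin n') ℝ)
    (v : Fin n' → ℝ) :
    (G *ᵥ v) ⬝ᵥ (G *ᵥ v) ≤ (sval G 1)^2 * (v ⬝ᵥ v) := by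
  have hG := (by simpa using Matrix.isHermitian_conjTranspose_mul_self G : (Gᵀ * G).IsHermitian)
  set σ := Tuple.sort hG.eigenvalues with hσ
  set p : Fin n' := Fin.rev ⟨0, by omega⟩ with hp
  set top := hG.eigenvalues (σ p) with htop
  have htrans : Gᴴ = Gᵀ := by ext i j; simp
  have hnn : ∀ j, 0 ≤ hG.eigenvalues j := by
    intro j
    have hps : (Gᵀ * G).PosSemidef := by
      rw [← htrans]; exact Matrix.posSemidef_conjTranspose_mul_self G
    exact hps.eigenvalues_nonneg j
  have hsv : (sval G 1)^2 = top := by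
    rw [sval, dif_pos ⟨le_refl 1, hn⟩]
    exact Real.sq_sqrt (hnn _)
  have hmax : ∀ j, hG.eigenvalues j ≤ top := by
    intro j
    have h2 : hG.eigenvalues (σ (σ.symm j)) = hG.eigenvalues j := by
      rw [Equiv.apply_symm_apply]
    rw [← h2]
    refine Tuple.monotone_sort hG.eigenvalues ?_
    rw [Fin.le_def]
    have := (σ.symm j).isLt
    simp [hp, Fin.rev]
    omega
  have hb : v ⬝ᵥ ((Gᵀ * G) *ᵥ v) ≤ top * (v ⬝ᵥ v) :=
    rayleigh_le_of_mem hG (fun j _ => hmax j)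
      ((mem_eigSub hG).mpr (fun j hj => absurd (Finset.mem_univ j) hj))
  have hTq : v ⬝ᵥ ((Gᵀ * G) *ᵥ v) = (G *ᵥ v) ⬝ᵥ (G *ᵥ v) := by
    rw [← mulVec_mulVec, dotProduct_mulVec, vecMul_transpose]
  rw [hsv, ← hTq]
  exact hb

private lemma row_proj {r' n' : ℕ} (G Q : Matrix (Fin r') (Fin n') ℝ) (hQ : Q * Qᵀ = 1)
    (hrow : Submodule.span ℝ (Set.range Q) = Submodule.span ℝ (Set.range G)) :
    G * (Qᵀ * Q) = G := by
  set P := Qᵀ * Q with hP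
  set f : (Fin n' → ℝ) →ₗ[ℝ] (Fin n' → ℝ) :=
    Matrix.mulVecLin Pᵀ - LinearMap.id with hf
  have hgen : ∀ i, Q i ∈ LinearMap.ker f := by
    intro i
    rw [LinearMap.mem_ker]
    have h1 : Q *ᵥ (Q i) = fun j => (1 : Matrix (Fin r') (Fin r') ℝ) j i := by
      ext j
      rw [← hQ]
      simp [Matrix.mulVec, Matrix.mul_apply, dotProduct]
    have h2 : (Q i) ᵥ* P = Q i := by
      rw [hP, ← Matrix.vecMul_vecMul, Matrix.vecMul_transpose, h1]
      ext k
      simp [Matrix.vecMul, dotProduct, Matrix.one_apply]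
    have h3 : Pᵀ *ᵥ (Q i) = Q i := by rw [Matrix.mulVec_transpose, h2]
    simp only [hf, LinearMap.sub_apply, LinearMap.id_apply, Matrix.mulVecLin_apply, h3, sub_self]
  have hspan : Submodule.span ℝ (Set.range G) ≤ LinearMap.ker f := by
    rw [← hrow, Submodule.span_le]
    rintro v ⟨i, rfl⟩
    exact hgen i
  have hrows : ∀ i, f (G i) = 0 := fun i =>
    LinearMap.mem_ker.mp (hspan (Submodule.subset_span ⟨i, rfl⟩))
  ext i j
  have h := congrFun (hrows i) j
  simp [hf, Matrix.mulVec_transpose] at h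
  rw [Matrix.mul_apply]
  have h' := congrFun (sub_eq_zero.mp (by ext k; exact congrFun (hrows i) k :
    Pᵀ *ᵥ (G i) - G i = 0)) j
  rw [Matrix.mulVec_transpose] at h'
  simpa [Matrix.vecMul, dotProduct, Matrix.mul_apply] using h'

end Helpers

theorem least_singular_value_of_orthonormalized_product {r n l : ℕ}
    (hrl : r < l) (hln : l < n)
    (G : Matrix (Fin r) (Fin n) ℝ) (H : Matrix (Fin n) (Fin l) ℝ)
    (hGH : (G * H).rank = r)
    (Q : Matrix (Fin r) (Fin n) ℝ) (hQ : Q * Qᵀ = 1)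
    (hrow : Submodule.span ℝ (Set.range Q) = Submodule.span ℝ (Set.range G)) :
    sval (Q * H) r ≥ sval (G * H) r / sval G 1 := by
  have hc0 : 0 ≤ sval G 1 := sval_nonneg G 1
  rcases eq_or_lt_of_le hc0 with hc | hc
  · rw [ge_iff_le, ← hc, div_zero]
    exact sval_nonneg _ _
  · rw [ge_iff_le, div_le_iff₀ hc, mul_comm]
    rcases Nat.eq_zero_or_pos r with hr | hr
    · subst hr
      have h0 : sval (G * H) 0 = 0 := by rw [sval, dif_neg (by omega)]
      rw [h0]
      exact mul_nonneg hc0 (sval_nonneg _ _)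
    · have hn1 : 1 ≤ n := by omega
      have hGP : G * (Qᵀ * Q) = G := row_proj G Q hQ hrow
      refine sval_le_of_dominated (G * H) (Q * H) hc0 (fun x => ?_) hr (le_of_lt hrl)
      set w := (Q * H) *ᵥ x with hw
      have e1 : (G * H) *ᵥ x = G *ᵥ (Qᵀ *ᵥ w) := by
        conv_lhs => rw [← hGP]
        rw [hw, Matrix.mulVec_mulVec, Matrix.mulVec_mulVec]
        simp only [Matrix.mul_assoc]
      have e2 : (Qᵀ *ᵥ w) ⬝ᵥ (Qᵀ *ᵥ w) = w ⬝ᵥ w := by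
        have h3 : w ⬝ᵥ ((Qᵀᵀ * Qᵀ) *ᵥ w) = (Qᵀ *ᵥ w) ⬝ᵥ (Qᵀ *ᵥ w) := by
          rw [← Matrix.mulVec_mulVec, Matrix.dotProduct_mulVec, Matrix.vecMul_transpose]
        rw [Matrix.transpose_transpose, hQ, Matrix.one_mulVec] at h3
        exact h3.symm
      calc ((G * H) *ᵥ x) ⬝ᵥ ((G * H) *ᵥ x)
          = (G *ᵥ (Qᵀ *ᵥ w)) ⬝ᵥ (G *ᵥ (Qᵀ *ᵥ w)) := by rw [e1]
        _ ≤ (sval G 1)^2 * ((Qᵀ *ᵥ w) ⬝ᵥ (Qᵀ *ᵥ w)) := opnorm_bound hn1 G _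
        _ = (sval G 1)^2 * (w ⬝ᵥ w) := by rw [e2]


end LRA
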